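/- arXiv:1010.2668 — 2 statements merged into one kernel-verified Lean document; each statement's English description precedes it below -/
import Mathlib

section
/- In the single-centre setup with potential U₁(x) = V(‖x−c‖) + F·x_n for 0 < ‖x−c‖ < a and U₁(x) = F·x_n for ‖x−c‖ ≥ a, let p = (Πc, y₁) be the lowest point of the inner turning set S = {x : 0 < ‖x−c‖ < a, U₁(x) = E} and let q = c − a·e_n be the lowest point of the sphere ∂B(c,a). Then for every C¹ path γ:[0,1]→ℝⁿ with γ(0) ∈ S and γ(1) ∈ ∂B(c,a) one has L_A(γ) ≥ L_A(g), where g(t) = p + t·(q − p) is the straight radial segment from p to q; in particular the Agmon distance satisfies ρ_E(S, ∂B(c,a)) = L_A(g). -/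
open MeasureTheory Filter

/-- The Agmon length of a `C¹` path for mass `m`, energy `E`, potential `U`. -/
noncomputable def agmonLength {n : ℕ} (m E : ℝ) (U : EuclideanSpace ℝ (Fin n) → ℝ)
    (γ : ℝ → EuclideanSpace ℝ (Fin n)) : ℝ :=
  Real.sqrt (2 * m) * ∫ t in (0:ℝ)..1, Real.sqrt (max (U (γ t) - E) 0) * ‖deriv γ t‖

/-- The Agmon distance between two sets: the infimum of the Agmon length over `C¹`
paths starting in `A` and ending in `B`. -/
noncomputable def agmonDist {n : ℕ} (m E : ℝ) (U : EuclideanSpace ℝ (Fin n) → ℝ)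
    (A B : Set (EuclideanSpace ℝ (Fin n))) : ℝ :=
  sInf {L : ℝ | ∃ γ : ℝ → EuclideanSpace ℝ (Fin n),
    ContDiff ℝ 1 γ ∧ γ 0 ∈ A ∧ γ 1 ∈ B ∧ L = agmonLength m E U γ}

open scoped RealInnerProductSpace in
set_option maxHeartbeats 1000000 in
/-- Single-centre setup in `ℝ^{n+2}` with potential
`U₁(x) = V(‖x−c‖) + F xₙ` (where `V ≡ 0` on `[a,∞)`), lowest point `p = (Πc, y₁)` of the
inner turning set `S` and lowest point `q = c − a eₙ` of the sphere `∂B(c,a)`.  For every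
`C¹` path `γ` from `S` to `∂B(c,a)` one has `L_A(γ) ≥ L_A(g)`, where
`g(t) = p + t (q − p)` is the straight radial segment; in particular
`ρ_E(S, ∂B(c,a)) = L_A(g)`. -/
theorem radial_segment_is_shortest_geodesic
    (n : ℕ) (m F E a : ℝ) (hm : 0 < m) (hF : 0 < F) (hE : E < 0) (ha : 0 < a)
    (c : EuclideanSpace ℝ (Fin (n + 2)))
    (hhalf : E / F < c (Fin.last (n + 1)) - a)
    (V : ℝ → ℝ)
    (hVcont : ContinuousOn V (Set.Ioo 0 a))
    (hVdiff : DifferentiableOn ℝ V (Set.Ioo 0 a))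
    (hVmono : StrictMonoOn V (Set.Ioo 0 a))
    (hVneg : ∀ s ∈ Set.Ioo 0 a, V s < 0)
    (hVsing : Tendsto V (nhdsWithin 0 (Set.Ioi 0)) atBot)
    (hVedge : Tendsto V (nhdsWithin a (Set.Iio a)) (nhds 0))
    (hVout : ∀ s : ℝ, a ≤ s → V s = 0)
    (U₁ : EuclideanSpace ℝ (Fin (n + 2)) → ℝ)
    (hU₁ : ∀ x, U₁ x = V ‖x - c‖ + F * x (Fin.last (n + 1)))
    (S : Set (EuclideanSpace ℝ (Fin (n + 2))))
    (hS : S = {x | ‖x - c‖ ∈ Set.Ioo 0 a ∧ U₁ x = E})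
    (y₁ : ℝ)
    (hy₁ : IsLeast {y | y ∈ Set.Ioo (c (Fin.last (n + 1)) - a) (c (Fin.last (n + 1))) ∧
      V |y - c (Fin.last (n + 1))| + F * y = E} y₁)
    (p q : EuclideanSpace ℝ (Fin (n + 2)))
    (hp : p = Function.update c (Fin.last (n + 1)) y₁)
    (hq : q = c - a • EuclideanSpace.single (Fin.last (n + 1)) (1 : ℝ)) :
    (∀ γ : ℝ → EuclideanSpace ℝ (Fin (n + 2)), ContDiff ℝ 1 γ →
      γ 0 ∈ S → γ 1 ∈ Metric.sphere c a →
      agmonLength m E U₁ (fun t => p + t • (q - p)) ≤ agmonLength m E U₁ γ) ∧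
    agmonDist m E U₁ S (Metric.sphere c a) =
      agmonLength m E U₁ (fun t => p + t • (q - p)) := by
  classical
  set N : Fin (n + 2) := Fin.last (n + 1) with hN
  set cN : ℝ := c N with hcN
  set r₁ : ℝ := cN - y₁ with hr₁
  obtain ⟨⟨hy₁mem, hy₁eq⟩, hy₁least⟩ := hy₁
  have hy₁lt : y₁ < cN := hy₁mem.2
  have hy₁gt : cN - a < y₁ := hy₁mem.1
  have hr₁pos : 0 < r₁ := by simp [hr₁]; linarith
  have hr₁lt : r₁ < a := by simp only [hr₁]; linarith
  have habs : |y₁ - cN| = r₁ := by rw [abs_of_neg (by linarith)]; ring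
  have hVr₁ : V r₁ + F * y₁ = E := by rw [← habs]; exact hy₁eq
  have hVa : V a = 0 := hVout a le_rfl
  have hFa : 0 < F * (cN - a) - E := by
    have := (div_lt_iff₀ hF).mp hhalf
    nlinarith
  -- continuity of V on (0, ∞)
  have hVcontA : ContinuousAt V a := by
    have h1 : Tendsto V (nhdsWithin a (Set.Iio a)) (nhds (V a)) := by rwa [hVa]
    have h2 : Tendsto V (nhdsWithin a (Set.Ici a)) (nhds (V a)) := by
      have : ∀ᶠ s in nhdsWithin a (Set.Ici a), V s = 0 :=
        eventually_nhdsWithin_of_forall (fun s hs => hVout s hs)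
      rw [hVa]
      exact Tendsto.congr' (this.mono fun s hs => hs.symm) tendsto_const_nhds
    rw [ContinuousAt, ← nhdsLT_sup_nhdsGE a]
    exact Tendsto.sup h1 h2
  have hVcont' : ∀ s : ℝ, 0 < s → ContinuousAt V s := by
    intro s hs
    rcases lt_trichotomy s a with h | h | h
    · exact (hVcont.continuousAt (Ioo_mem_nhds hs h))
    · rwa [h]
    · have : ∀ᶠ u in nhds s, V u = 0 := by
        filter_upwards [Ioi_mem_nhds h] with u hu
        exact hVout u (le_of_lt hu)
      exact continuousAt_const.congr (this.mono fun u hu => hu.symm) |>.congr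
        (by rfl)
  have hVle0 : ∀ s : ℝ, 0 < s → V s ≤ 0 := by
    intro s hs
    rcases lt_or_ge s a with h | h
    · exact le_of_lt (hVneg s ⟨hs, h⟩)
    · exact le_of_eq (hVout s h)
  -- the 1-d effective potential
  set w : ℝ → ℝ := fun s => V s + F * (cN - s) - E with hw
  have hwcont : ∀ s : ℝ, 0 < s → ContinuousAt w s := by
    intro s hs
    exact ((hVcont' s hs).add ((continuousAt_const.sub continuousAt_id).const_mul F)).sub
      continuousAt_const
  -- δ such that w < 0 on (0, δ)
  obtain ⟨δ, hδpos, hδ⟩ : ∃ δ : ℝ, 0 < δ ∧ ∀ s ∈ Set.Ioo (0:ℝ) δ, w s < 0 := by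
    have h1 : ∀ᶠ s in nhdsWithin 0 (Set.Ioi 0), V s ≤ E - F * cN - 1 :=
      hVsing.eventually_le_atBot _
    obtain ⟨u, hu, hsub⟩ := mem_nhdsGT_iff_exists_Ioo_subset.mp h1
    refine ⟨u, hu, fun s hs => ?_⟩
    have := hsub hs
    simp only [Set.mem_setOf_eq] at this
    have hs0 : 0 < s := hs.1
    simp only [hw]
    nlinarith
  set f : ℝ → ℝ := fun s => if 0 < s then Real.sqrt (max (w s) 0) else 0 with hf
  have hfpos : ∀ s : ℝ, 0 < s → f s = Real.sqrt (max (w s) 0) := fun s hs => if_pos hs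
  have hfnonneg : ∀ s : ℝ, 0 ≤ f s := by
    intro s; by_cases h : 0 < s
    · rw [hfpos s h]; exact Real.sqrt_nonneg _
    · simp [hf, h]
  have hf0 : ∀ s : ℝ, s < δ → f s = 0 := by
    intro s hs
    by_cases h : 0 < s
    · rw [hfpos s h, max_eq_right (le_of_lt (hδ s ⟨h, hs⟩)), Real.sqrt_zero]
    · simp [hf, h]
  have hfcont : Continuous f := by
    rw [continuous_iff_continuousAt]
    intro t
    rcases lt_or_ge 0 t with ht | ht
    · have hc : ContinuousAt (fun s => Real.sqrt (max (w s) 0)) t :=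
        Real.continuous_sqrt.continuousAt.comp ((hwcont t ht).max continuousAt_const)
      exact hc.congr (eventually_of_mem (Ioi_mem_nhds ht) fun s hs => (if_pos hs).symm)
    · have : ∀ᶠ s in nhds t, f s = 0 := by
        filter_upwards [Iio_mem_nhds (lt_of_le_of_lt ht hδpos)] with s hs
        exact hf0 s hs
      exact continuousAt_const.congr (this.mono fun s hs => hs.symm)
  -- Φ  = antiderivative of f
  set Φ : ℝ → ℝ := fun y => ∫ s in (0:ℝ)..y, f s with hΦ
  have hΦderiv : ∀ y : ℝ, HasDerivAt Φ (f y) y := by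
    intro y
    exact intervalIntegral.integral_hasDerivAt_right (hfcont.intervalIntegrable (μ := volume) 0 y)
      (hfcont.stronglyMeasurableAtFilter volume (nhds y)) hfcont.continuousAt
  have hΦsub : ∀ y z : ℝ, Φ z - Φ y = ∫ s in y..z, f s := by
    intro y z
    have := intervalIntegral.integral_add_adjacent_intervals
      (hfcont.intervalIntegrable (μ := volume) 0 y) (hfcont.intervalIntegrable (μ := volume) y z)
    simp only [hΦ]
    linarith
  have hΦmono : ∀ y z : ℝ, y ≤ z → Φ y ≤ Φ z := by
    intro y z hyz
    have h1 := hΦsub y z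
    have h2 : (0:ℝ) ≤ ∫ s in y..z, f s :=
      intervalIntegral.integral_nonneg hyz (fun s _ => hfnonneg s)
    linarith
  have hΦ0 : ∀ y : ℝ, y < δ → Φ y = 0 := by
    intro y hy
    have : Set.EqOn f 0 (Set.uIcc 0 y) := by
      intro s hs
      have : s ≤ max 0 y := (Set.mem_uIcc.mp hs).elim (fun h => le_max_of_le_right h.2)
        (fun h => le_max_of_le_left h.2)
      exact hf0 s (lt_of_le_of_lt this (max_lt hδpos hy))
    simp only [hΦ]
    rw [intervalIntegral.integral_congr this]
    simp
  -- positivity of w on (r₁, a]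
  have hwpos : ∀ s : ℝ, r₁ < s → s ≤ a → 0 < w s := by
    intro s hrs hsa
    rcases eq_or_lt_of_le hsa with rfl | hsa
    · simp only [hw]; rw [hVa]; linarith
    by_contra hcon
    push_neg at hcon
    -- find s' ∈ (s, a) with w s' > 0
    have hlim : Tendsto w (nhdsWithin a (Set.Iio a)) (nhds (F * (cN - a) - E)) := by
      have : Tendsto (fun u => V u + F * (cN - u) - E) (nhdsWithin a (Set.Iio a))
          (nhds (0 + F * (cN - a) - E)) := by
        apply Tendsto.sub _ tendsto_const_nhds
        exact hVedge.add ((continuous_const.mul (continuous_const.sub continuous_id)).continuousAt.tendsto.mono_left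
          nhdsWithin_le_nhds)
      simpa using this
    have hev : ∀ᶠ u in nhdsWithin a (Set.Iio a), 0 < w u :=
      hlim.eventually (eventually_gt_nhds hFa)
    have hmem : Set.Ioi s ∈ nhdsWithin a (Set.Iio a) :=
      nhdsWithin_le_nhds (Ioi_mem_nhds hsa)
    have hmem' : ∀ᶠ u in nhdsWithin a (Set.Iio a), u ∈ Set.Ioi s :=
      eventually_of_mem hmem (fun _ h => h)
    have hIio : ∀ᶠ u in nhdsWithin a (Set.Iio a), u ∈ Set.Iio a := eventually_mem_nhdsWithin
    obtain ⟨s', hs'pos, hs'gt, hs'lt⟩ := (hev.and (hmem'.and hIio)).exists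
    -- IVT on [s, s']
    have hscont : ContinuousOn w (Set.Icc s s') := by
      intro u hu
      exact (hwcont u (lt_of_lt_of_le (lt_trans hr₁pos hrs) hu.1)).continuousWithinAt
    have h0mem : (0:ℝ) ∈ Set.Icc (w s) (w s') := ⟨hcon, le_of_lt hs'pos⟩
    obtain ⟨z, hz, hzw⟩ := intermediate_value_Icc (le_of_lt hs'gt) hscont h0mem
    -- z gives a root y = cN - z of the defining equation
    have hz0 : 0 < z := lt_of_lt_of_le (lt_trans hr₁pos hrs) hz.1
    have hza : z < a := lt_of_le_of_lt hz.2 hs'lt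
    have : y₁ ≤ cN - z := by
      apply hy₁least
      constructor
      · constructor <;> [linarith; linarith]
      · have : |cN - z - cN| = z := by rw [show cN - z - cN = -z by ring, abs_neg, abs_of_pos hz0]
        rw [this]
        simp only [hw] at hzw
        linarith
    have hzr : z ≤ r₁ := by simp only [hr₁] at *; linarith
    have := hz.1
    linarith
  -- coordinate bound
  have hcoord : ∀ x : EuclideanSpace ℝ (Fin (n + 2)), |x N - c N| ≤ ‖x - c‖ := by
    intro x
    have h1 : (x - c) N = x N - c N := rfl
    have h2 : ⟪EuclideanSpace.single N (1:ℝ), x - c⟫ = (x - c) N := by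
      rw [EuclideanSpace.inner_single_left]; simp
    calc |x N - c N| = |⟪EuclideanSpace.single N (1:ℝ), x - c⟫| := by rw [h2, h1]
      _ ≤ ‖EuclideanSpace.single N (1:ℝ)‖ * ‖x - c‖ := abs_real_inner_le_norm _ _
      _ = ‖x - c‖ := by rw [EuclideanSpace.norm_single]; simp
  have hUw : ∀ x : EuclideanSpace ℝ (Fin (n + 2)), w ‖x - c‖ ≤ U₁ x - E := by
    intro x
    have h1 := hcoord x
    have h2 : cN - x N ≤ ‖x - c‖ := le_trans (neg_le_abs _ |>.trans_eq' (by rw [hcN]; ring_nf)) h1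
    simp only [hw, hU₁ x]
    nlinarith
  -- key inequality for arbitrary admissible paths
  have key : ∀ γ : ℝ → EuclideanSpace ℝ (Fin (n + 2)), ContDiff ℝ 1 γ →
      γ 0 ∈ S → γ 1 ∈ Metric.sphere c a →
      (∫ s in r₁..a, f s) ≤ ∫ t in (0:ℝ)..1, Real.sqrt (max (U₁ (γ t) - E) 0) * ‖deriv γ t‖ := by
    intro γ hγ hγ0 hγ1
    set r : ℝ → ℝ := fun t => ‖γ t - c‖ with hr
    have hγc : Continuous γ := hγ.continuous
    have hγ' : Continuous (deriv γ) := hγ.continuous_deriv le_rfl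
    have hrc : Continuous r := (hγc.sub continuous_const).norm
    have hrpos : ∀ t, γ t ≠ c → 0 < r t := by
      intro t h
      simp only [hr]
      rw [norm_pos_iff]
      exact sub_ne_zero.mpr h
    set D : ℝ → ℝ := fun t => if γ t = c then 0
      else f (r t) * (⟪γ t - c, deriv γ t⟫ / r t) with hD
    have hsmall : ∀ t : ℝ, γ t = c → ∀ᶠ u in nhds t, r u < δ := by
      intro t hc
      have h1 : Tendsto r (nhds t) (nhds (r t)) := hrc.continuousAt
      have hrt : r t = 0 := by simp [hr, hc]
      rw [hrt] at h1
      exact h1 (Iio_mem_nhds hδpos)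
    have hDderiv : ∀ t : ℝ, HasDerivAt (fun u => Φ (r u)) (D t) t := by
      intro t
      by_cases hc : γ t = c
      · have hev : (fun u => Φ (r u)) =ᶠ[nhds t] (fun _ => (0:ℝ)) := by
          filter_upwards [hsmall t hc] with u hu
          exact hΦ0 _ hu
        have : D t = 0 := by simp [hD, hc]
        rw [this]
        exact (hasDerivAt_const t (0:ℝ)).congr_of_eventuallyEq hev
      · have hrt : 0 < r t := hrpos t hc
        have hut : γ t - c ≠ 0 := sub_ne_zero.mpr hc
        have hd1 : HasDerivAt (fun u => γ u - c) (deriv γ t) t :=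
          ((hγ.differentiable one_ne_zero t).hasDerivAt).sub_const c
        have hinner : HasDerivAt (fun u => ⟪γ u - c, γ u - c⟫)
            (⟪γ t - c, deriv γ t⟫ + ⟪deriv γ t, γ t - c⟫) t := hd1.inner (𝕜 := ℝ) hd1
        have hinnpos : (0:ℝ) < ⟪γ t - c, γ t - c⟫ := by
          rw [real_inner_self_eq_norm_mul_norm]
          exact mul_pos hrt hrt
        have hsq : HasDerivAt Real.sqrt (1 / (2 * Real.sqrt ⟪γ t - c, γ t - c⟫))
            ⟪γ t - c, γ t - c⟫ := Real.hasDerivAt_sqrt (ne_of_gt hinnpos)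
        have hcomp := hsq.comp t hinner
        have hreq : (fun u => Real.sqrt ⟪γ u - c, γ u - c⟫) = r := by
          funext u
          rw [real_inner_self_eq_norm_mul_norm, Real.sqrt_mul_self (norm_nonneg _)]
        rw [Function.comp_def, hreq] at hcomp
        have hsqrt_r : Real.sqrt ⟪γ t - c, γ t - c⟫ = r t := by
          rw [real_inner_self_eq_norm_mul_norm, Real.sqrt_mul_self (norm_nonneg _)]
        have hrd : HasDerivAt r (⟪γ t - c, deriv γ t⟫ / r t) t := by
          refine hcomp.congr_deriv ?_
          rw [hsqrt_r, real_inner_comm (deriv γ t) (γ t - c)]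
          field_simp
          ring
        have := (hΦderiv (r t)).comp t hrd
        have hDt : D t = f (r t) * (⟪γ t - c, deriv γ t⟫ / r t) := if_neg hc
        rw [hDt]
        exact this
    have hDcont : Continuous D := by
      rw [continuous_iff_continuousAt]
      intro t
      by_cases hc : γ t = c
      · have hev : ∀ᶠ u in nhds t, D u = 0 := by
          filter_upwards [hsmall t hc] with u hu
          by_cases h : γ u = c
          · simp [hD, h]
          · simp only [hD, if_neg h]
            rw [hf0 _ hu, zero_mul]
        exact continuousAt_const.congr (hev.mono fun u hu => hu.symm)
      · have hopen : IsOpen {u : ℝ | γ u ≠ c} := (isClosed_singleton.preimage hγc).isOpen_compl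
        have hev : ∀ᶠ u in nhds t, D u = f (r u) * (⟪γ u - c, deriv γ u⟫ / r u) :=
          eventually_of_mem (hopen.mem_nhds hc) fun u hu => if_neg hu
        have hca : ContinuousAt (fun u => f (r u) * (⟪γ u - c, deriv γ u⟫ / r u)) t := by
          apply ContinuousAt.mul
          · exact (hfcont.comp hrc).continuousAt
          · exact ContinuousAt.div
              (((hγc.sub continuous_const).inner hγ').continuousAt)
              hrc.continuousAt (ne_of_gt (hrpos t hc))
        exact hca.congr (hev.mono fun u hu => hu.symm)
    -- integrability of the Agmon integrand
    have hZclosed : IsClosed {t : ℝ | γ t = c} := isClosed_singleton.preimage hγc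
    have hγN : Continuous (fun t => γ t N) := (continuous_apply N).comp ((PiLp.continuous_ofLp 2 _).comp hγc)
    have hGint : IntervalIntegrable
        (fun t => Real.sqrt (max (U₁ (γ t) - E) 0) * ‖deriv γ t‖) volume 0 1 := by
      rw [intervalIntegrable_iff_integrableOn_Icc_of_le zero_le_one]
      have h1 : IntegrableOn (fun t => Real.sqrt (max (U₁ (γ t) - E) 0) * ‖deriv γ t‖)
          (Set.Icc (0:ℝ) 1 ∩ {t | γ t = c}) volume := by
        apply ContinuousOn.integrableOn_compact (isCompact_Icc.inter_right hZclosed)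
        have hcont : Continuous (fun t => Real.sqrt (max (V 0 + F * γ t N - E) 0) * ‖deriv γ t‖) :=
          (Real.continuous_sqrt.comp
            (((continuous_const.add (continuous_const.mul hγN)).sub continuous_const).max
              continuous_const)).mul hγ'.norm
        apply hcont.continuousOn.congr
        intro t ht
        have hc : γ t = c := ht.2
        have h0 : ‖γ t - c‖ = 0 := by simp [hc]
        show Real.sqrt (max (U₁ (γ t) - E) 0) * ‖deriv γ t‖ =
          Real.sqrt (max (V 0 + F * γ t N - E) 0) * ‖deriv γ t‖
        rw [hU₁, h0]
      have hs₂meas : MeasurableSet (Set.Icc (0:ℝ) 1 \ {t | γ t = c}) :=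
        measurableSet_Icc.diff hZclosed.measurableSet
      have h2 : IntegrableOn (fun t => Real.sqrt (max (U₁ (γ t) - E) 0) * ‖deriv γ t‖)
          (Set.Icc (0:ℝ) 1 \ {t | γ t = c}) volume := by
        have hdom : Continuous (fun t => Real.sqrt (max (F * γ t N - E) 0) * ‖deriv γ t‖) :=
          (Real.continuous_sqrt.comp
            (((continuous_const.mul hγN).sub continuous_const).max continuous_const)).mul hγ'.norm
        apply Integrable.mono' (hdom.integrableOn_Icc.mono_set Set.diff_subset)
        · apply ContinuousOn.aestronglyMeasurable _ hs₂meas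
          intro t ht
          have hc : γ t ≠ c := ht.2
          apply ContinuousAt.continuousWithinAt
          have hV : ContinuousAt (fun u => V (r u)) t :=
            (hVcont' (r t) (hrpos t hc)).comp hrc.continuousAt
          have hUc : ContinuousAt (fun u => U₁ (γ u)) t := by
            have heq : (fun u => U₁ (γ u)) = fun u => V (r u) + F * γ u N :=
              funext fun u => hU₁ (γ u)
            rw [heq]
            exact hV.add (continuousAt_const.mul hγN.continuousAt)
          exact (Real.continuous_sqrt.continuousAt.comp
            ((hUc.sub continuousAt_const).max continuousAt_const)).mul
            hγ'.norm.continuousAt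
        · rw [ae_restrict_iff' hs₂meas]
          apply ae_of_all
          intro t ht
          have hc : γ t ≠ c := ht.2
          have hnn : (0:ℝ) ≤ Real.sqrt (max (U₁ (γ t) - E) 0) * ‖deriv γ t‖ :=
            mul_nonneg (Real.sqrt_nonneg _) (norm_nonneg _)
          rw [Real.norm_eq_abs, abs_of_nonneg hnn]
          apply mul_le_mul_of_nonneg_right _ (norm_nonneg _)
          apply Real.sqrt_le_sqrt
          apply max_le_max _ le_rfl
          rw [hU₁]
          have := hVle0 (r t) (hrpos t hc)
          simp only [hr] at this
          linarith
      apply (h1.union h2).mono_set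
      intro t ht
      by_cases h : γ t = c
      · exact Or.inl ⟨ht, h⟩
      · exact Or.inr ⟨ht, h⟩
    -- endpoint facts
    have hγ0' : r 0 ∈ Set.Ioo 0 a ∧ U₁ (γ 0) = E := by rw [hS] at hγ0; exact hγ0
    have hwr0 : w (r 0) ≤ 0 := by
      have h2 : cN - γ 0 N ≤ r 0 := by
        have h1 := hcoord (γ 0)
        have h3 : cN - γ 0 N ≤ |γ 0 N - c N| := by
          rw [← hcN, abs_sub_comm]
          exact le_abs_self _
        exact le_trans h3 h1
      have h3 : V (r 0) + F * (γ 0 N) = E := by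
        rw [← hU₁ (γ 0)]
        exact hγ0'.2
      have h4 : F * (cN - r 0) ≤ F * (γ 0 N) :=
        mul_le_mul_of_nonneg_left (by linarith) (le_of_lt hF)
      simp only [hw]
      linarith
    have hr0le : r 0 ≤ r₁ := by
      by_contra hcon
      push_neg at hcon
      exact absurd (hwpos (r 0) hcon (le_of_lt hγ0'.1.2)) (not_lt.mpr hwr0)
    have hr1a : r 1 = a := by
      have := hγ1
      rw [Metric.mem_sphere, dist_eq_norm] at this
      exact this
    have hstep2 : (∫ t in (0:ℝ)..1, D t) = Φ (r 1) - Φ (r 0) :=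
      intervalIntegral.integral_eq_sub_of_hasDerivAt (fun t _ => hDderiv t)
        (hDcont.intervalIntegrable (μ := volume) 0 1)
    have hDM : ∀ t : ℝ, D t ≤ f (r t) * ‖deriv γ t‖ := by
      intro t
      by_cases hc : γ t = c
      · simp only [hD, if_pos hc]
        exact mul_nonneg (hfnonneg _) (norm_nonneg _)
      · simp only [hD, if_neg hc]
        apply mul_le_mul_of_nonneg_left _ (hfnonneg _)
        rw [div_le_iff₀ (hrpos t hc)]
        calc ⟪γ t - c, deriv γ t⟫ ≤ ‖γ t - c‖ * ‖deriv γ t‖ := real_inner_le_norm _ _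
          _ = ‖deriv γ t‖ * r t := by simp only [hr]; ring
    have hMG : ∀ t : ℝ, f (r t) * ‖deriv γ t‖ ≤
        Real.sqrt (max (U₁ (γ t) - E) 0) * ‖deriv γ t‖ := by
      intro t
      apply mul_le_mul_of_nonneg_right _ (norm_nonneg _)
      by_cases hc : γ t = c
      · have : r t = 0 := by simp [hr, hc]
        rw [this]
        have : f 0 = 0 := by simp [hf]
        rw [this]
        exact Real.sqrt_nonneg _
      · rw [hfpos _ (hrpos t hc)]
        exact Real.sqrt_le_sqrt (max_le_max (hUw (γ t)) le_rfl)
    have hMcont : Continuous (fun t => f (r t) * ‖deriv γ t‖) :=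
      (hfcont.comp hrc).mul hγ'.norm
    have hMint : IntervalIntegrable (fun t => f (r t) * ‖deriv γ t‖) volume 0 1 :=
      hMcont.intervalIntegrable 0 1
    have hstep3 : (∫ t in (0:ℝ)..1, D t) ≤
        ∫ t in (0:ℝ)..1, f (r t) * ‖deriv γ t‖ :=
      intervalIntegral.integral_mono_on zero_le_one
        (hDcont.intervalIntegrable (μ := volume) 0 1) hMint (fun t _ => hDM t)
    have hstep4 : (∫ t in (0:ℝ)..1, f (r t) * ‖deriv γ t‖) ≤
        ∫ t in (0:ℝ)..1, Real.sqrt (max (U₁ (γ t) - E) 0) * ‖deriv γ t‖ :=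
      intervalIntegral.integral_mono_on zero_le_one hMint hGint (fun t _ => hMG t)
    have e1 := hΦsub r₁ a
    have e2 := hΦmono (r 0) r₁ hr0le
    rw [hr1a] at hstep2
    linarith
  -- geometry of the segment
  have hpc : p - c = (-r₁) • EuclideanSpace.single N (1:ℝ) := by
    ext j
    simp only [PiLp.sub_apply, PiLp.smul_apply, EuclideanSpace.single_apply, hp,
      Function.update_apply, smul_eq_mul]
    by_cases hj : j = N
    · subst hj
      simp [hr₁, hcN]
    · simp [hj]
  have hqp : q - p = (r₁ - a) • EuclideanSpace.single N (1:ℝ) := by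
    ext j
    simp only [PiLp.sub_apply, PiLp.smul_apply, EuclideanSpace.single_apply, hp, hq,
      Function.update_apply, smul_eq_mul]
    by_cases hj : j = N
    · subst hj
      simp [hr₁, hcN]
      ring
    · simp [hj]
  have hgc : ∀ t : ℝ, (p + t • (q - p)) - c =
      (-(r₁ + t * (a - r₁))) • EuclideanSpace.single N (1:ℝ) := by
    intro t
    have h1 : (p + t • (q - p)) - c = (p - c) + t • (q - p) := by abel
    rw [h1, hpc, hqp, smul_smul, ← add_smul]
    congr 1
    ring
  have hgd : ∀ t : ℝ, HasDerivAt (fun u : ℝ => p + u • (q - p)) (q - p) t := by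
    intro t
    simpa using ((hasDerivAt_id t).smul_const (q - p)).const_add p
  have hqpnorm : ‖q - p‖ = a - r₁ := by
    rw [hqp, norm_smul, EuclideanSpace.norm_single]
    simp [abs_of_neg (by linarith : r₁ - a < 0)]
  have hLg : agmonLength m E U₁ (fun t => p + t • (q - p)) =
      Real.sqrt (2 * m) * ∫ s in r₁..a, f s := by
    rw [agmonLength]
    congr 1
    have hEq : Set.EqOn
        (fun t => Real.sqrt (max (U₁ ((fun t : ℝ => p + t • (q - p)) t) - E) 0) *
          ‖deriv (fun u : ℝ => p + u • (q - p)) t‖)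
        (fun t => (a - r₁) • f (r₁ + t * (a - r₁))) (Set.uIcc 0 1) := by
      intro t ht
      rw [Set.uIcc_of_le zero_le_one] at ht
      have hρpos : 0 < r₁ + t * (a - r₁) := by nlinarith [ht.1, ht.2]
      have hnorm : ‖(p + t • (q - p)) - c‖ = r₁ + t * (a - r₁) := by
        rw [hgc t, norm_smul, EuclideanSpace.norm_single, norm_one, mul_one,
          Real.norm_eq_abs, abs_of_neg (by linarith : -(r₁ + t * (a - r₁)) < 0)]
        ring
      have hcoordN : (p + t • (q - p)) N = cN - (r₁ + t * (a - r₁)) := by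
        have h1 := congrArg (fun v : EuclideanSpace ℝ (Fin (n + 2)) => v N) (hgc t)
        simp only [PiLp.sub_apply, PiLp.smul_apply, EuclideanSpace.single_apply,
          if_pos rfl, if_true, smul_eq_mul, mul_one] at h1
        rw [← hcN] at h1
        linarith
      have hderiv : deriv (fun u : ℝ => p + u • (q - p)) t = q - p := (hgd t).deriv
      show Real.sqrt (max (U₁ (p + t • (q - p)) - E) 0) *
          ‖deriv (fun u : ℝ => p + u • (q - p)) t‖ = (a - r₁) • f (r₁ + t * (a - r₁))
      rw [hderiv, hqpnorm, hU₁, hnorm, hcoordN, hfpos _ hρpos]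
      simp only [hw, smul_eq_mul]
      ring
    rw [intervalIntegral.integral_congr hEq]
    have hsub := intervalIntegral.integral_comp_smul_deriv (a := 0) (b := 1)
      (f := fun t : ℝ => r₁ + t * (a - r₁)) (f' := fun _ : ℝ => a - r₁) (g := f)
      (fun t _ => ((hasDerivAt_mul_const (a - r₁)).const_add r₁)) continuousOn_const hfcont
    simp only [Function.comp_def] at hsub
    rw [hsub, show r₁ + 0 * (a - r₁) = r₁ by ring, show r₁ + 1 * (a - r₁) = a by ring]
    -- endpoints of the segment
  have hg0 : p + (0:ℝ) • (q - p) = p := by simp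
  have hg1 : p + (1:ℝ) • (q - p) = q := by simp
  have hpnorm : ‖p - c‖ = r₁ := by
    rw [hpc, norm_smul, EuclideanSpace.norm_single, norm_one, mul_one,
      Real.norm_eq_abs, abs_of_neg (by linarith : -r₁ < 0)]
    ring
  have hpN : p N = y₁ := by rw [hp]; exact Function.update_self N y₁ c
  have hpS : p ∈ S := by
    rw [hS]
    refine ⟨?_, ?_⟩
    · rw [hpnorm]
      exact ⟨hr₁pos, hr₁lt⟩
    · rw [hU₁, hpnorm, hpN]
      exact hVr₁
  have hqsph : q ∈ Metric.sphere c a := by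
    rw [Metric.mem_sphere, dist_eq_norm]
    have hqc : q - c = -(a • EuclideanSpace.single N (1:ℝ)) := by
      rw [hq]; abel
    rw [hqc, norm_neg, norm_smul, EuclideanSpace.norm_single, norm_one, mul_one,
      Real.norm_eq_abs, abs_of_pos ha]
  have part1 : ∀ γ : ℝ → EuclideanSpace ℝ (Fin (n + 2)), ContDiff ℝ 1 γ →
      γ 0 ∈ S → γ 1 ∈ Metric.sphere c a →
      agmonLength m E U₁ (fun t => p + t • (q - p)) ≤ agmonLength m E U₁ γ := by
    intro γ h1 h2 h3
    rw [hLg, agmonLength]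
    exact mul_le_mul_of_nonneg_left (key γ h1 h2 h3) (Real.sqrt_nonneg _)
  refine ⟨part1, ?_⟩
  have hgC1 : ContDiff ℝ 1 (fun t : ℝ => p + t • (q - p)) :=
    contDiff_const.add (contDiff_id.smul contDiff_const)
  have hmem : agmonLength m E U₁ (fun t => p + t • (q - p)) ∈
      {L : ℝ | ∃ γ : ℝ → EuclideanSpace ℝ (Fin (n + 2)),
        ContDiff ℝ 1 γ ∧ γ 0 ∈ S ∧ γ 1 ∈ Metric.sphere c a ∧
        L = agmonLength m E U₁ γ} :=
    ⟨fun t => p + t • (q - p), hgC1, by simpa [hg0] using hpS, by simpa [hg1] using hqsph, rfl⟩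
  have hlb : ∀ L ∈ {L : ℝ | ∃ γ : ℝ → EuclideanSpace ℝ (Fin (n + 2)),
      ContDiff ℝ 1 γ ∧ γ 0 ∈ S ∧ γ 1 ∈ Metric.sphere c a ∧
      L = agmonLength m E U₁ γ},
      agmonLength m E U₁ (fun t => p + t • (q - p)) ≤ L := by
    rintro L ⟨γ, hγ, h0, h1, rfl⟩
    exact part1 γ hγ h0 h1
  rw [agmonDist]
  exact le_antisymm (csInf_le ⟨_, hlb⟩ hmem) (le_csInf ⟨_, hmem⟩ hlb)
end

section
/- For the linear potential U(x) = F·x_n on ℝⁿ with F>0, m>0, E ∈ ℝ, and any point x with x_n ≥ E/F, the Agmon distance from x to the hyperplane S_E^+ = {y ∈ ℝⁿ : y_n = E/F} equals (2/3)·√(2mF)·(x_n − E/F)^{3/2}; i.e. the infimum over C¹ paths γ:[0,1]→ℝⁿ with γ(0)=x and γ(1) ∈ S_E^+ of √(2m)·∫₀¹ (max(F·γ_n(t)−E,0))^{1/2}·‖γ'(t)‖ dt equals (2/3)·√(2mF)·(x_n − E/F)^{3/2}, and it is attained by the vertical straight segment g(t) = x − t·(x_n − E/F)·e_n. Equivalently,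 ρ̃_E(x, Px) = (2/3)·√(2mF)·‖x − Px‖^{3/2}, where Px = (x_1,…,x_{n−1}, E/F). -/
open MeasureTheory

private noncomputable def phiAux (s : ℝ) : ℝ := 2/3 * max s 0 * Real.sqrt (max s 0)

private lemma hasDerivAt_phiAux (s : ℝ) : HasDerivAt phiAux (Real.sqrt (max s 0)) s := by
  rcases lt_trichotomy s 0 with h | h | h
  · have hev : phiAux =ᶠ[nhds s] fun _ => 0 := by
      filter_upwards [Iio_mem_nhds h] with t ht
      simp [phiAux, max_eq_right (le_of_lt (Set.mem_Iio.1 ht))]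
    have h0 := (hasDerivAt_const s (0:ℝ)).congr_of_eventuallyEq hev
    simpa [max_eq_right h.le] using h0
  · subst h
    have : HasDerivAt phiAux 0 0 := by
      rw [hasDerivAt_iff_isLittleO]
      simp only [phiAux, max_self, sub_zero, smul_zero, Real.sqrt_zero, mul_zero]
      rw [Asymptotics.isLittleO_iff]
      intro c hc
      rw [Metric.eventually_nhds_iff]
      refine ⟨c^2, by positivity, fun {t} ht => ?_⟩
      simp only [Real.dist_eq, sub_zero] at ht
      rcases le_or_gt t 0 with h1 | h1
      · simp [max_eq_right h1]
        positivity
      · rw [max_eq_left h1.le]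
        have h2 : Real.sqrt t ≤ c := by
          rw [show c = Real.sqrt (c^2) from (Real.sqrt_sq hc.le).symm]
          exact Real.sqrt_le_sqrt (by rw [abs_of_pos h1] at ht; linarith)
        have h3 : (0:ℝ) ≤ Real.sqrt t := Real.sqrt_nonneg t
        rw [Real.norm_eq_abs, Real.norm_eq_abs, abs_of_pos h1,
          abs_of_nonneg (by positivity)]
        nlinarith
    simpa using this
  · have hev : phiAux =ᶠ[nhds s] fun t => 2/3 * (t * Real.sqrt t) := by
      filter_upwards [Ioi_mem_nhds h] with t ht
      simp [phiAux, max_eq_left (le_of_lt (Set.mem_Ioi.1 ht)), mul_assoc]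
    have h1 : HasDerivAt (fun t : ℝ => t * Real.sqrt t)
        (1 * Real.sqrt s + s * (1 / (2 * Real.sqrt s))) s :=
      (hasDerivAt_id s).mul (Real.hasDerivAt_sqrt h.ne')
    have h2 := (h1.const_mul (2/3 : ℝ)).congr_of_eventuallyEq hev
    have hs : Real.sqrt s > 0 := Real.sqrt_pos.2 h
    have hss : Real.sqrt s * Real.sqrt s = s := Real.mul_self_sqrt h.le
    have heq : 2/3 * (1 * Real.sqrt s + s * (1 / (2 * Real.sqrt s))) = Real.sqrt (max s 0) := by
      rw [max_eq_left h.le]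
      field_simp
      nlinarith
    rwa [heq] at h2

private lemma hasDerivAt_Phi (E F : ℝ) (hF : 0 < F) (s : ℝ) :
    HasDerivAt (fun s => Real.sqrt F * phiAux (s - E/F))
      (Real.sqrt (max (F * s - E) 0)) s := by
  have h1 : HasDerivAt (fun s : ℝ => phiAux (s - E/F))
      (Real.sqrt (max (s - E/F) 0) * 1) s := by
    have := (hasDerivAt_phiAux (s - E/F)).comp s ((hasDerivAt_id s).sub_const (E/F)); exact this
  have h2 := h1.const_mul (Real.sqrt F)
  have heq : Real.sqrt F * (Real.sqrt (max (s - E/F) 0) * 1) =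
      Real.sqrt (max (F * s - E) 0) := by
    rw [mul_one, ← Real.sqrt_mul hF.le, mul_max_of_nonneg _ _ hF.le, mul_zero,
      mul_sub, mul_div_cancel₀ _ hF.ne']
  rwa [heq] at h2

private lemma ftc_key (E F : ℝ) (hF : 0 < F) (k : ℝ → ℝ) (hk : ContDiff ℝ 1 k) :
    ∫ t in (0:ℝ)..1, Real.sqrt (max (F * k t - E) 0) * (-(deriv k t)) =
      Real.sqrt F * phiAux (k 0 - E/F) - Real.sqrt F * phiAux (k 1 - E/F) := by
  have hcomp : ∀ t : ℝ, HasDerivAt (fun t => Real.sqrt F * phiAux (k t - E/F))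
      (Real.sqrt (max (F * k t - E) 0) * deriv k t) t := fun t =>
    (hasDerivAt_Phi E F hF (k t)).comp t ((hk.differentiable one_ne_zero t).hasDerivAt)
  have hcont : Continuous fun t => Real.sqrt (max (F * k t - E) 0) * deriv k t := by
    apply Continuous.mul
    · exact Real.continuous_sqrt.comp (((continuous_const.mul (hk.continuous)).sub
        continuous_const).max continuous_const)
    · exact hk.continuous_deriv le_rfl
  have hint : IntervalIntegrable (fun t => Real.sqrt (max (F * k t - E) 0) * deriv k t)
      volume 0 1 := hcont.intervalIntegrable 0 1
  have h := intervalIntegral.integral_eq_sub_of_hasDerivAt (fun t _ => hcomp t) hint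
  have heq : ∫ t in (0:ℝ)..1, Real.sqrt (max (F * k t - E) 0) * (-(deriv k t)) =
      -∫ t in (0:ℝ)..1, Real.sqrt (max (F * k t - E) 0) * deriv k t := by
    rw [← intervalIntegral.integral_neg]
    congr 1; funext t; ring
  rw [heq, h]; ring

private lemma abs_coord_le_norm {N : ℕ} (v : EuclideanSpace ℝ (Fin N)) (i : Fin N) :
    |v i| ≤ ‖v‖ := by
  rw [EuclideanSpace.norm_eq]
  calc |v i| = Real.sqrt (‖v i‖ ^ 2) := by
        rw [Real.norm_eq_abs, Real.sqrt_sq_eq_abs, abs_abs]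
    _ ≤ _ := Real.sqrt_le_sqrt (Finset.single_le_sum
        (f := fun j => ‖v j‖ ^ 2) (fun j _ => sq_nonneg _) (Finset.mem_univ i))

private lemma val_eq (m F d : ℝ) (hm : 0 ≤ m) (hd : 0 ≤ d) :
    Real.sqrt (2*m) * (Real.sqrt F * phiAux d) =
      2/3 * Real.sqrt (2*m*F) * d ^ ((3:ℝ)/2) := by
  have h32 : d ^ ((3:ℝ)/2) = d * Real.sqrt d := by
    rcases eq_or_lt_of_le hd with h | h
    · rw [← h, Real.zero_rpow (by norm_num), Real.sqrt_zero, mul_zero]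
    · rw [show (3:ℝ)/2 = 1 + 1/2 by norm_num, Real.rpow_add h, Real.rpow_one,
        Real.sqrt_eq_rpow]
  rw [h32, phiAux, max_eq_left hd, Real.sqrt_mul (by positivity : (0:ℝ) ≤ 2*m) F]
  ring

private lemma hasDerivAt_coord {N : ℕ} (γ : ℝ → EuclideanSpace ℝ (Fin N))
    (hγ : ContDiff ℝ 1 γ) (i : Fin N) (t : ℝ) :
    HasDerivAt (fun s => γ s i) (deriv γ t i) t :=
  (EuclideanSpace.proj (𝕜 := ℝ) i).hasFDerivAt.comp_hasDerivAt t
    ((hγ.differentiable one_ne_zero t).hasDerivAt)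

private lemma length_lower {N : ℕ} (m E F : ℝ) (hF : 0 < F)
    (U : EuclideanSpace ℝ (Fin N) → ℝ) (i : Fin N)
    (hU : ∀ x, U x = F * x i)
    (γ : ℝ → EuclideanSpace ℝ (Fin N)) (hγ : ContDiff ℝ 1 γ) :
    Real.sqrt (2*m) * (Real.sqrt F * phiAux (γ 0 i - E/F)
        - Real.sqrt F * phiAux (γ 1 i - E/F))
      ≤ agmonLength m E U γ := by
  set k : ℝ → ℝ := fun t => γ t i with hk_def
  have hk : ContDiff ℝ 1 k := (EuclideanSpace.proj (𝕜 := ℝ) i).contDiff.comp hγ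
  have hderiv : ∀ t, deriv k t = deriv γ t i := fun t => (hasDerivAt_coord γ hγ i t).deriv
  have hcontM : Continuous fun t => Real.sqrt (max (F * k t - E) 0) :=
    Real.continuous_sqrt.comp (((continuous_const.mul hk.continuous).sub
      continuous_const).max continuous_const)
  have hint1 : IntervalIntegrable
      (fun t => Real.sqrt (max (F * k t - E) 0) * (-(deriv k t))) volume 0 1 :=
    (hcontM.mul (hk.continuous_deriv le_rfl).neg).intervalIntegrable 0 1
  have hcontγ : Continuous (deriv γ) := hγ.continuous_deriv le_rfl
  have hint2 : IntervalIntegrable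
      (fun t => Real.sqrt (max (F * k t - E) 0) * ‖deriv γ t‖) volume 0 1 :=
    (hcontM.mul hcontγ.norm).intervalIntegrable 0 1
  have hmono : ∫ t in (0:ℝ)..1, Real.sqrt (max (F * k t - E) 0) * (-(deriv k t)) ≤
      ∫ t in (0:ℝ)..1, Real.sqrt (max (F * k t - E) 0) * ‖deriv γ t‖ := by
    apply intervalIntegral.integral_mono_on zero_le_one hint1 hint2
    intro t _
    apply mul_le_mul_of_nonneg_left _ (Real.sqrt_nonneg _)
    calc -(deriv k t) ≤ |deriv k t| := neg_le_abs _
      _ = |deriv γ t i| := by rw [hderiv]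
      _ ≤ ‖deriv γ t‖ := abs_coord_le_norm _ _
  have hftc := ftc_key E F hF k hk
  rw [agmonLength]
  have hUeq : (fun t => Real.sqrt (max (U (γ t) - E) 0) * ‖deriv γ t‖)
      = fun t => Real.sqrt (max (F * k t - E) 0) * ‖deriv γ t‖ := by
    funext t; rw [hU]
  rw [hUeq]
  apply mul_le_mul_of_nonneg_left _ (Real.sqrt_nonneg _)
  rw [← hftc]
  exact hmono

/-- Eq. (28) of the paper.  For the linear potential `U(x) = F xₙ`
on `ℝ^{n+2}` with `F > 0`, `m > 0`, and any point `x` with `xₙ ≥ E/F`, the Agmon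
distance from `x` to the hyperplane `S_E^+ = {yₙ = E/F}` equals
`(2/3) √(2 m F) (xₙ − E/F)^{3/2}`, it is attained by the vertical straight segment
`g(t) = x − t (xₙ − E/F) eₙ`, and equals `(2/3) √(2 m F) ‖x − P x‖^{3/2}` with
`P x = (x₁,…,x_{n−1}, E/F)`. -/
theorem agmon_distance_linear_potential
    (n : ℕ) (m E F : ℝ) (hm : 0 < m) (hF : 0 < F)
    (U : EuclideanSpace ℝ (Fin (n + 2)) → ℝ)
    (hU : ∀ x, U x = F * x (Fin.last (n + 1)))
    (P : EuclideanSpace ℝ (Fin (n + 2)) → EuclideanSpace ℝ (Fin (n + 2)))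
    (hP : ∀ y, P y = Function.update y (Fin.last (n + 1)) (E / F))
    (x : EuclideanSpace ℝ (Fin (n + 2)))
    (hx : E / F ≤ x (Fin.last (n + 1))) :
    agmonDist m E U {x} {y | y (Fin.last (n + 1)) = E / F} =
      (2 / 3) * Real.sqrt (2 * m * F) *
        (x (Fin.last (n + 1)) - E / F) ^ ((3 : ℝ) / 2) ∧
    agmonLength m E U (fun t => x - (t * (x (Fin.last (n + 1)) - E / F)) •
        EuclideanSpace.single (Fin.last (n + 1)) (1 : ℝ)) =
      (2 / 3) * Real.sqrt (2 * m * F) *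
        (x (Fin.last (n + 1)) - E / F) ^ ((3 : ℝ) / 2) ∧
    agmonDist m E U {x} {y | y (Fin.last (n + 1)) = E / F} =
      (2 / 3) * Real.sqrt (2 * m * F) *
        ‖x - P x‖ ^ ((3 : ℝ) / 2) := by
  set i : Fin (n + 2) := Fin.last (n + 1) with hi
  set d : ℝ := x i - E / F with hd_def
  have hd : 0 ≤ d := sub_nonneg.2 hx
  set e : EuclideanSpace ℝ (Fin (n + 2)) := EuclideanSpace.single i (1 : ℝ) with he
  set g : ℝ → EuclideanSpace ℝ (Fin (n + 2)) := fun t => x - (t * d) • e with hg_def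
  set V : ℝ := 2 / 3 * Real.sqrt (2 * m * F) * d ^ ((3 : ℝ) / 2) with hV_def
  -- basic facts about g
  have hg : ContDiff ℝ 1 g :=
    contDiff_const.sub ((contDiff_id.mul contDiff_const).smul contDiff_const)
  have hgd : ∀ t : ℝ, HasDerivAt g (-((1 * d) • e)) t := fun t =>
    HasDerivAt.const_sub x (((hasDerivAt_id t).mul_const d).smul_const e)
  have hderivg : ∀ t, deriv g t = -((1 * d) • e) := fun t => (hgd t).deriv
  have hnorme : ‖e‖ = 1 := by rw [he, EuclideanSpace.norm_single, norm_one]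
  have hnormg : ∀ t, ‖deriv g t‖ = d := by
    intro t
    rw [hderivg, norm_neg, norm_smul, hnorme, mul_one, one_mul,
      Real.norm_eq_abs, abs_of_nonneg hd]
  have hcoorde : e i = 1 := by
    rw [he, EuclideanSpace.single_apply, if_pos rfl]
  have hgi : ∀ t : ℝ, g t i = x i - t * d := by
    intro t
    have : g t i = x i - (t * d) * e i := rfl
    rw [this, hcoorde, mul_one]
  have hki : ∀ t : ℝ, deriv (fun s => g s i) t = -d := by
    intro t
    have h1 : (fun s : ℝ => g s i) = fun s => x i - s * d := by
      funext s; exact hgi s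
    rw [h1]
    have h2 : HasDerivAt (fun s : ℝ => x i - s * d) (-(1 * d)) t :=
      HasDerivAt.const_sub (x i) ((hasDerivAt_id t).mul_const d)
    rw [h2.deriv, one_mul]
  have hkC : ContDiff ℝ 1 (fun s => g s i) :=
    (EuclideanSpace.proj (𝕜 := ℝ) i).contDiff.comp hg
  -- agmonLength of g
  have hphi0 : phiAux 0 = 0 := by simp [phiAux]
  have hlen : agmonLength m E U g = V := by
    rw [agmonLength]
    have hUeq : (fun t => Real.sqrt (max (U (g t) - E) 0) * ‖deriv g t‖)
        = fun t => Real.sqrt (max (F * (fun s => g s i) t - E) 0)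
            * (-(deriv (fun s => g s i) t)) := by
      funext t
      rw [hU, hnormg, hki, neg_neg]
    rw [hUeq, ftc_key E F hF _ hkC]
    have h0 : g 0 i - E / F = d := by rw [hgi, hd_def]; ring
    have h1 : g 1 i - E / F = 0 := by rw [hgi, hd_def]; ring
    rw [h0, h1, hphi0, mul_zero, sub_zero, val_eq m F d hm.le hd, hV_def]
  -- the infimum
  have hmem : V ∈ {L : ℝ | ∃ γ : ℝ → EuclideanSpace ℝ (Fin (n + 2)),
      ContDiff ℝ 1 γ ∧ γ 0 ∈ ({x} : Set _) ∧
      γ 1 ∈ {y : EuclideanSpace ℝ (Fin (n + 2)) | y i = E / F} ∧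
      L = agmonLength m E U γ} := by
    refine ⟨g, hg, ?_, ?_, hlen.symm⟩
    · show g 0 = x
      rw [hg_def]; simp
    · show g 1 i = E / F
      rw [hgi, one_mul, hd_def]; ring
  have hlb : ∀ L ∈ {L : ℝ | ∃ γ : ℝ → EuclideanSpace ℝ (Fin (n + 2)),
      ContDiff ℝ 1 γ ∧ γ 0 ∈ ({x} : Set _) ∧
      γ 1 ∈ {y : EuclideanSpace ℝ (Fin (n + 2)) | y i = E / F} ∧
      L = agmonLength m E U γ}, V ≤ L := by
    rintro L ⟨γ, hγ, hγ0, hγ1, rfl⟩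
    have hγ0' : γ 0 = x := hγ0
    have hγ1' : γ 1 i = E / F := hγ1
    have h := length_lower m E F hF U i hU γ hγ
    rw [hγ0', hγ1', sub_self, hphi0, mul_zero, sub_zero, val_eq m F d hm.le hd] at h
    exact h
  have hdist : agmonDist m E U {x} {y | y i = E / F} = V := by
    rw [agmonDist]
    exact le_antisymm (csInf_le ⟨V, hlb⟩ hmem) (le_csInf ⟨V, hmem⟩ hlb)
  -- norm of x - P x
  have hPx : x - P x = EuclideanSpace.single i d := by
    ext j
    rw [PiLp.sub_apply, hP x]
    show x j - Function.update x i (E / F) j = EuclideanSpace.single i d j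
    rw [EuclideanSpace.single_apply, Function.update_apply]
    rcases eq_or_ne j i with h | h
    · rw [if_pos h, if_pos h, h, hd_def]
    · rw [if_neg h, if_neg h, sub_self]
  have hnormPx : ‖x - P x‖ = d := by
    rw [hPx, EuclideanSpace.norm_single, Real.norm_eq_abs, abs_of_nonneg hd]
  refine ⟨?_, ?_, ?_⟩
  · rw [hdist]
  · exact hlen
  · rw [hdist, hnormPx]
end
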